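/- For m ≥ 2 and 1 ≤ i ≤ m-1, the sequence of Boros-Moll coefficients is log-concave: d_i(m)^2 ≥ d_{i-1}(m) * d_{i+1}(m). -/

import Mathlib

open Finset

/-- The Boros-Moll coefficient `d_i(m)`. -/
def bmCoeff (m i : ℕ) : ℚ :=
  (∑ k ∈ Finset.Icc i m,
    (2:ℚ)^k * (Nat.choose (2*m-2*k) (m-k)) * (Nat.choose (m+k) k) * (Nat.choose k i)) / 2^(2*m)

/-- The rescaled coefficient `D_i(m)`. -/
def bmD (m i : ℕ) : ℚ :=
  (Nat.choose (2*m) (m-i)) * (Nat.factorial m) * (Nat.factorial i) *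
    (Nat.factorial (m-i)) * 2^i * bmCoeff m i

/-- The summand. -/
def bmT (m i k : ℕ) : ℚ :=
  (2:ℚ)^k * (Nat.choose (2*m-2*k) (m-k)) * (Nat.choose (m+k) k) * (Nat.choose k i)

/-- The telescoping certificate. -/
def bmG (m i K : ℕ) : ℚ :=
  (i:ℚ) * (2*(m:ℚ)+1-2*(K:ℚ)) * (2:ℚ)^K * (Nat.choose (2*m-2*K) (m-K)) *
    (Nat.choose (m+K) K) * (Nat.choose K i)

lemma bmCoeff_eq (m i : ℕ) :
    bmCoeff m i = (∑ k ∈ Finset.range (m+1), bmT m i k) / 2^(2*m) := by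
  unfold bmCoeff bmT
  congr 1
  refine Finset.sum_subset ?_ ?_
  · intro x hx
    simp only [Finset.mem_Icc] at hx
    simp only [Finset.mem_range]
    omega
  · intro x hx hnx
    simp only [Finset.mem_range] at hx
    simp only [Finset.mem_Icc] at hnx
    have : x < i := by omega
    rw [Nat.choose_eq_zero_of_lt this]
    simp

lemma bmT_nonneg (m i k : ℕ) : 0 ≤ bmT m i k := by unfold bmT; positivity

lemma bmCoeff_pos (m i : ℕ) (him : i ≤ m) : 0 < bmCoeff m i := by
  rw [bmCoeff_eq]
  apply div_pos _ (by positivity)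
  have hmem : m ∈ Finset.range (m+1) := by simp
  refine lt_of_lt_of_le ?_ (Finset.single_le_sum (fun k _ => bmT_nonneg m i k) hmem)
  unfold bmT
  have h1 : 2*m - 2*m = 0 := by omega
  have h2 : m - m = 0 := by omega
  rw [h1, h2]
  have h3 : (0:ℚ) < (Nat.choose (m+m) m : ℚ) := by
    exact_mod_cast Nat.choose_pos (by omega : m ≤ m+m)
  have h4 : (0:ℚ) < (Nat.choose m i : ℚ) := by exact_mod_cast Nat.choose_pos him
  have h5 : (0:ℚ) < (Nat.choose 0 0 : ℚ) := by norm_num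
  positivity

lemma bmCoeff_top (m : ℕ) : bmCoeff m (m+1) = 0 := by
  unfold bmCoeff
  rw [Finset.Icc_eq_empty (by omega)]
  simp

lemma bm_step (m i k : ℕ) (hi : 1 ≤ i) (him : i ≤ m) (hk : k < m) :
    (i:ℚ)*((i:ℚ)+1)*bmT m (i+1) k + ((m:ℚ)+(i:ℚ))*((m:ℚ)+1-(i:ℚ))*bmT m (i-1) k
      - (i:ℚ)*(2*(m:ℚ)+1)*bmT m i k = bmG m i (k+1) - bmG m i k := by
  obtain ⟨j, rfl⟩ : ∃ j, m = k + j + 1 := ⟨m - k - 1, by omega⟩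
  obtain ⟨s, rfl⟩ : ∃ s, i = s + 1 := ⟨i - 1, by omega⟩
  unfold bmT bmG
  have e1 : 2*(k+j+1) - 2*k = 2*j+2 := by omega
  have e2 : (k+j+1) - k = j+1 := by omega
  have e3 : 2*(k+j+1) - 2*(k+1) = 2*j := by omega
  have e4 : (k+j+1) - (k+1) = j := by omega
  have e5 : s + 1 - 1 = s := by omega
  have e6 : (k+j+1) + (k+1) = 2*k+j+2 := by omega
  have e7 : (k+j+1) + k = 2*k+j+1 := by omega
  rw [e1, e2, e3, e4, e5, e6, e7]
  -- central binomial relation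
  have hcb := Nat.succ_mul_centralBinom_succ j
  have hcb2 : Nat.centralBinom (j+1) = Nat.choose (2*j+2) (j+1) := by
    have h : 2*(j+1) = 2*j+2 := by omega
    simp [Nat.centralBinom, h]
  have hcb3 : Nat.centralBinom j = Nat.choose (2*j) j := rfl
  rw [hcb2, hcb3] at hcb
  have E1 : ((Nat.choose (2*j) j : ℕ) : ℚ)
      = ((j:ℚ)+1) * ((Nat.choose (2*j+2) (j+1) : ℕ) : ℚ) / (2*(2*(j:ℚ)+1)) := by
    rw [eq_div_iff (by positivity)]
    have : ((j+1) * Nat.choose (2*j+2) (j+1) : ℕ) = (2*(2*j+1) * Nat.choose (2*j) j : ℕ) := hcb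
    have h' := congrArg (fun n : ℕ => (n : ℚ)) this
    push_cast at h'
    linarith [h']
  have hsm := Nat.add_one_mul_choose_eq (2*k+j+1) k
  have E2 : ((Nat.choose (2*k+j+2) (k+1) : ℕ) : ℚ)
      = (2*(k:ℚ)+(j:ℚ)+2) * ((Nat.choose (2*k+j+1) k : ℕ) : ℚ) / ((k:ℚ)+1) := by
    rw [eq_div_iff (by positivity)]
    have : (2*k+j+1).succ * Nat.choose (2*k+j+1) k
        = Nat.choose ((2*k+j+1)+1) (k+1) * (k+1) := hsm
    have h2 : (2*k+j+1)+1 = 2*k+j+2 := by omega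
    rw [h2] at this
    have h' := congrArg (fun n : ℕ => (n : ℚ)) this
    push_cast at h'
    linarith [h']
  have E3 : ((Nat.choose (k+1) (s+1) : ℕ) : ℚ)
      = ((Nat.choose k s : ℕ) : ℚ) + ((Nat.choose k (s+1) : ℕ) : ℚ) := by
    exact_mod_cast congrArg (fun n : ℕ => (n : ℚ)) (Nat.choose_succ_succ k s)
  by_cases hsk : s + 1 ≤ k
  · -- main case: i ≤ k
    have E4 : ((Nat.choose k (s+2) : ℕ) : ℚ)
        = ((Nat.choose k (s+1) : ℕ) : ℚ) * ((k:ℚ)-(s:ℚ)-1) / ((s:ℚ)+2) := by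
      rw [eq_div_iff (by positivity)]
      have h := Nat.choose_succ_right_eq k (s+1)
      have h2 : k - (s+1) = k - s - 1 := by omega
      have h' := congrArg (fun n : ℕ => (n : ℚ)) h
      push_cast [Nat.cast_sub hsk] at h'
      push_cast
      linarith [h']
    have E5 : ((Nat.choose k s : ℕ) : ℚ)
        = ((Nat.choose k (s+1) : ℕ) : ℚ) * ((s:ℚ)+1) / ((k:ℚ)-(s:ℚ)) := by
      rw [eq_div_iff (by nlinarith [show (s:ℚ)+1 ≤ (k:ℚ) from by exact_mod_cast hsk])]
      have h := Nat.choose_succ_right_eq k s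
      have h' := congrArg (fun n : ℕ => (n : ℚ)) h
      push_cast [Nat.cast_sub (show s ≤ k by omega)] at h'
      linarith [h']
    rw [E4, E3, E1, E2, E5]
    have hk1 : ((k:ℚ)-(s:ℚ)) ≠ 0 := by
      have : (s:ℚ)+1 ≤ (k:ℚ) := by exact_mod_cast hsk
      linarith
    push_cast
    field_simp
    ring
  · by_cases hks : s = k
    · -- i = k+1
      subst hks
      have z1 : Nat.choose s (s+2) = 0 := Nat.choose_eq_zero_of_lt (by omega)
      have z2 : Nat.choose s (s+1) = 0 := Nat.choose_eq_zero_of_lt (by omega)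
      have z3 : Nat.choose s s = 1 := Nat.choose_self s
      have z4 : Nat.choose (s+1) (s+1) = 1 := Nat.choose_self (s+1)
      rw [z1, z2, z3, z4, E1, E2]
      push_cast
      field_simp
      ring
    · -- i > k+1 : everything vanishes
      have hlt : k < s := by omega
      have z1 : Nat.choose k (s+2) = 0 := Nat.choose_eq_zero_of_lt (by omega)
      have z2 : Nat.choose k (s+1) = 0 := Nat.choose_eq_zero_of_lt (by omega)
      have z3 : Nat.choose k s = 0 := Nat.choose_eq_zero_of_lt (by omega)
      have z4 : Nat.choose (k+1) (s+1) = 0 := Nat.choose_eq_zero_of_lt (by omega)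
      rw [z1, z2, z3, z4]
      push_cast
      ring

lemma bm_boundary (m i : ℕ) (hi : 1 ≤ i) (him : i ≤ m) :
    (i:ℚ)*((i:ℚ)+1)*bmT m (i+1) m + ((m:ℚ)+(i:ℚ))*((m:ℚ)+1-(i:ℚ))*bmT m (i-1) m
      - (i:ℚ)*(2*(m:ℚ)+1)*bmT m i m + bmG m i m = 0 := by
  obtain ⟨s, rfl⟩ : ∃ s, i = s + 1 := ⟨i - 1, by omega⟩
  unfold bmT bmG
  have e1 : 2*m - 2*m = 0 := by omega
  have e2 : m - m = 0 := by omega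
  have e5 : s + 1 - 1 = s := by omega
  have e8 : s + 1 + 1 = s + 2 := by omega
  have e9 : Nat.choose 0 0 = 1 := rfl
  rw [e1, e2, e5, e8, e9]
  have hsm : s + 1 ≤ m := him
  have R1 : ((Nat.choose m (s+2) : ℕ) : ℚ) * ((s:ℚ)+2)
      = ((Nat.choose m (s+1) : ℕ) : ℚ) * ((m:ℚ)-(s:ℚ)-1) := by
    have h := Nat.choose_succ_right_eq m (s+1)
    have h' := congrArg (fun n : ℕ => (n : ℚ)) h
    push_cast [Nat.cast_sub hsm] at h'
    push_cast
    linarith [h']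
  have R2 : ((Nat.choose m (s+1) : ℕ) : ℚ) * ((s:ℚ)+1)
      = ((Nat.choose m s : ℕ) : ℚ) * ((m:ℚ)-(s:ℚ)) := by
    have h := Nat.choose_succ_right_eq m s
    have h' := congrArg (fun n : ℕ => (n : ℚ)) h
    push_cast [Nat.cast_sub (show s ≤ m by omega)] at h'
    linarith [h']
  push_cast
  linear_combination ((2:ℚ)^m * ((Nat.choose (m+m) m : ℕ) : ℚ)) *
      (((s:ℚ)+1) * R1) - ((2:ℚ)^m * ((Nat.choose (m+m) m : ℕ) : ℚ)) * (((m:ℚ)+(s:ℚ)+1) * R2)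

lemma bm_star (m i : ℕ) (hi : 1 ≤ i) (him : i ≤ m) :
    (i:ℚ)*((i:ℚ)+1)*bmCoeff m (i+1) + ((m:ℚ)+(i:ℚ))*((m:ℚ)+1-(i:ℚ))*bmCoeff m (i-1)
      = (i:ℚ)*(2*(m:ℚ)+1)*bmCoeff m i := by
  rw [bmCoeff_eq, bmCoeff_eq, bmCoeff_eq]
  have hD : ((2:ℚ)^(2*m)) ≠ 0 := by positivity
  have key : ∑ k ∈ Finset.range (m+1),
      ((i:ℚ)*((i:ℚ)+1)*bmT m (i+1) k + ((m:ℚ)+(i:ℚ))*((m:ℚ)+1-(i:ℚ))*bmT m (i-1) k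
        - (i:ℚ)*(2*(m:ℚ)+1)*bmT m i k) = 0 := by
    rw [Finset.sum_range_succ]
    have tele : ∑ k ∈ Finset.range m,
        ((i:ℚ)*((i:ℚ)+1)*bmT m (i+1) k + ((m:ℚ)+(i:ℚ))*((m:ℚ)+1-(i:ℚ))*bmT m (i-1) k
          - (i:ℚ)*(2*(m:ℚ)+1)*bmT m i k) = bmG m i m - bmG m i 0 := by
      rw [← Finset.sum_range_sub (bmG m i) m]
      exact Finset.sum_congr rfl (fun k hk => bm_step m i k hi him (Finset.mem_range.mp hk))
    have hG0 : bmG m i 0 = 0 := by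
      unfold bmG
      rw [Nat.choose_eq_zero_of_lt (by omega : 0 < i)]
      simp
    have hb := bm_boundary m i hi him
    rw [tele, hG0]
    linarith [hb]
  have expand : ∑ k ∈ Finset.range (m+1),
      ((i:ℚ)*((i:ℚ)+1)*bmT m (i+1) k + ((m:ℚ)+(i:ℚ))*((m:ℚ)+1-(i:ℚ))*bmT m (i-1) k
        - (i:ℚ)*(2*(m:ℚ)+1)*bmT m i k)
      = (i:ℚ)*((i:ℚ)+1)*(∑ k ∈ Finset.range (m+1), bmT m (i+1) k)
        + ((m:ℚ)+(i:ℚ))*((m:ℚ)+1-(i:ℚ))*(∑ k ∈ Finset.range (m+1), bmT m (i-1) k)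
        - (i:ℚ)*(2*(m:ℚ)+1)*(∑ k ∈ Finset.range (m+1), bmT m i k) := by
    rw [Finset.sum_sub_distrib, Finset.sum_add_distrib, ← Finset.mul_sum, ← Finset.mul_sum,
      ← Finset.mul_sum]
  rw [expand] at key
  field_simp
  linear_combination key

lemma bm_div_nonneg {x y : ℚ} (hx : 0 < x) (h : 0 ≤ x * y) : 0 ≤ y := by
  by_contra hy
  push_neg at hy
  nlinarith [mul_pos hx (neg_pos.mpr hy)]

set_option maxHeartbeats 1000000 in
/-- The key invariant, proved by downward induction on `i`. -/
lemma bm_inv (m : ℕ) (hm : 1 ≤ m) : ∀ n i, 1 ≤ i → i ≤ m → m - i = n →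
    4*((i:ℚ)+1)*((m:ℚ)+(i:ℚ))*((m:ℚ)+1-(i:ℚ)) ≤ (i:ℚ)*(2*(m:ℚ)+1)^2 →
    (0 ≤ (i:ℚ)*((i:ℚ)+1)*(bmCoeff m i)^2
        - (i:ℚ)*(2*(m:ℚ)+1)*bmCoeff m (i-1)*bmCoeff m i
        + ((m:ℚ)+(i:ℚ))*((m:ℚ)+1-(i:ℚ))*(bmCoeff m (i-1))^2)
    ∧ 2*((i:ℚ)+1)*bmCoeff m i ≤ (2*(m:ℚ)+1)*bmCoeff m (i-1) := by
  intro n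
  induction n with
  | zero =>
    intro i hi1 hi2 hin _
    have him : i = m := by omega
    subst him
    have hstar := bm_star i i (by omega) le_rfl
    rw [bmCoeff_top i] at hstar
    set a := bmCoeff i (i-1) with ha
    set b := bmCoeff i i with hb
    have hb0 : 0 < b := bmCoeff_pos i i le_rfl
    have ha0 : 0 < a := bmCoeff_pos i (i-1) (by omega)
    have hi0 : (1:ℚ) ≤ (i:ℚ) := by exact_mod_cast hi1
    -- hstar : i*(i+1)*0 + (i+i)*(i+1-i)*a = i*(2i+1)*b
    have hE : 2*(i:ℚ)*a = (i:ℚ)*(2*(i:ℚ)+1)*b := by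
      have h1 : ((i:ℚ)+(i:ℚ))*((i:ℚ)+1-(i:ℚ))*a = (i:ℚ)*(2*(i:ℚ)+1)*b := by
        linarith [hstar]
      linarith [h1]
    have hE2 : 2*a = (2*(i:ℚ)+1)*b := by
      have hine : (i:ℚ) ≠ 0 := by linarith
      have h2 : (i:ℚ) * (2*a) = (i:ℚ) * ((2*(i:ℚ)+1)*b) := by linear_combination hE
      exact mul_left_cancel₀ hine h2
    constructor
    · have key : (i:ℚ)*((i:ℚ)+1)*b^2 - (i:ℚ)*(2*(i:ℚ)+1)*a*b + ((i:ℚ)+(i:ℚ))*((i:ℚ)+1-(i:ℚ))*a^2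
          = (i:ℚ)*((i:ℚ)+1)*b^2 + ((i:ℚ)/2) * ((2*a - (2*(i:ℚ)+1)*b) * (2*a + (2*(i:ℚ)+1)*b))
            - ((i:ℚ)*(2*(i:ℚ)+1)/2) * b * (2*a - (2*(i:ℚ)+1)*b) := by ring
      rw [key]
      have hz : 2*a - (2*(i:ℚ)+1)*b = 0 := by linarith [hE2]
      rw [hz]
      have : (0:ℚ) ≤ (i:ℚ)*((i:ℚ)+1)*b^2 := by positivity
      linarith [this]
    · have hE3 : (2*(i:ℚ)+1)*(2*a) = (2*(i:ℚ)+1)*((2*(i:ℚ)+1)*b) := by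
        linear_combination (2*(i:ℚ)+1) * hE2
      nlinarith [hE3, hb0.le, mul_nonneg (show (0:ℚ) ≤ (i:ℚ)^2-1 by nlinarith) hb0.le]
  | succ n ih =>
    intro i hi1 hi2 hin hdisc
    have hilt : i < m := by omega
    set a := bmCoeff m (i-1) with ha
    set b := bmCoeff m i with hb
    set c := bmCoeff m (i+1) with hc
    have ha0 : 0 < a := bmCoeff_pos m (i-1) (by omega)
    have hb0 : 0 < b := bmCoeff_pos m i (by omega)
    have hc0 : 0 < c := bmCoeff_pos m (i+1) (by omega)
    have hi0 : (1:ℚ) ≤ (i:ℚ) := by exact_mod_cast hi1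
    have himq : (i:ℚ) + 1 ≤ (m:ℚ) := by exact_mod_cast hilt
    have hP : (0:ℚ) < ((m:ℚ)+(i:ℚ))*((m:ℚ)+1-(i:ℚ)) := by nlinarith
    -- discriminant at i+1
    have hdisc2 : 4*(((i:ℚ)+1)+1)*((m:ℚ)+((i:ℚ)+1))*((m:ℚ)+1-((i:ℚ)+1))
        ≤ ((i:ℚ)+1)*(2*(m:ℚ)+1)^2 := by
      have hD1 : (0:ℚ) ≤ (i:ℚ)*(2*(m:ℚ)+1)^2 - 4*((i:ℚ)+1)*((m:ℚ)+(i:ℚ))*((m:ℚ)+1-(i:ℚ)) := by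
        linarith [hdisc]
      have hsq : (0:ℚ) ≤ ((i:ℚ)+1) * ((i:ℚ)*(2*(m:ℚ)+1)^2
          - 4*((i:ℚ)+1)*((m:ℚ)+(i:ℚ))*((m:ℚ)+1-(i:ℚ))) :=
        mul_nonneg (by positivity) hD1
      have hq2 : (0:ℚ) ≤ 2*(i:ℚ)^3 + 4*(i:ℚ)^2 + ((m:ℚ)+(i:ℚ))*((m:ℚ)+1-(i:ℚ)) := by
        have hq1 : (0:ℚ) ≤ 2*(i:ℚ)^3+4*(i:ℚ)^2 := by positivity
        linarith [hP]
      have h9 : (0:ℚ) ≤ (4:ℚ) * (2*(i:ℚ)^3 + 4*(i:ℚ)^2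
          + ((m:ℚ)+(i:ℚ))*((m:ℚ)+1-(i:ℚ))) :=
        mul_nonneg (by norm_num) hq2
      have hscaled : (0:ℚ) ≤ (i:ℚ) * (((i:ℚ)+1)*(2*(m:ℚ)+1)^2
          - 4*(((i:ℚ)+1)+1)*((m:ℚ)+((i:ℚ)+1))*((m:ℚ)+1-((i:ℚ)+1))) := by
        linarith [hsq, h9]
      have hipos : (0:ℚ) < (i:ℚ) := by linarith
      have := bm_div_nonneg hipos hscaled
      linarith [this]
    -- invoke IH at i+1
    have hIH := ih (i+1) (by omega) (by omega) (by omega) ?_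
    swap
    · push_cast
      push_cast at hdisc2
      linarith [hdisc2]
    obtain ⟨H1, H2⟩ := hIH
    have hred : (i+1) - 1 = i := by omega
    rw [hred] at H1 H2
    push_cast at H1 H2
    rw [← hb, ← hc] at H1 H2
    -- star at i
    have hstar := bm_star m i hi1 (by omega)
    rw [← ha, ← hb, ← hc] at hstar
    have hPa : ((m:ℚ)+(i:ℚ))*((m:ℚ)+1-(i:ℚ))*a
        = (i:ℚ)*(2*(m:ℚ)+1)*b - (i:ℚ)*((i:ℚ)+1)*c := by linarith [hstar]
    constructor
    · -- Q-form at i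
      have hs : (i:ℚ)*((i:ℚ)+1)*(2*(m:ℚ)+1)*b * (2*(((i:ℚ)+1)+1)*c)
          ≤ (i:ℚ)*((i:ℚ)+1)*(2*(m:ℚ)+1)*b * ((2*(m:ℚ)+1)*b) := by
        apply mul_le_mul_of_nonneg_left H2
        positivity
      have hH : (0:ℚ) ≤ 2*(i:ℚ)*((i:ℚ)+1)*((i:ℚ)+2) *
          (((i:ℚ)+1)*(((i:ℚ)+1)+1)*c^2 - ((i:ℚ)+1)*(2*(m:ℚ)+1)*b*c
            + ((m:ℚ)+((i:ℚ)+1))*((m:ℚ)+1-((i:ℚ)+1))*b^2) := by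
        apply mul_nonneg (by positivity)
        linarith [H1]
      have hB2 : (0:ℚ) ≤ ((i:ℚ)+1)*b^2*(8*(m:ℚ)^2+8*(m:ℚ)+4*(i:ℚ)^2+7*(i:ℚ)) := by positivity
      have hK2 : (0:ℚ) ≤ 2*((i:ℚ)+2)^2 *
          ((i:ℚ)*((i:ℚ)+1)^2*c^2 - (i:ℚ)*((i:ℚ)+1)*(2*(m:ℚ)+1)*c*b
            + ((i:ℚ)+1)*((m:ℚ)+(i:ℚ))*((m:ℚ)+1-(i:ℚ))*b^2) := by linarith [hs, hH, hB2]
      have hK : (0:ℚ) ≤ (i:ℚ)*((i:ℚ)+1)^2*c^2 - (i:ℚ)*((i:ℚ)+1)*(2*(m:ℚ)+1)*c*b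
            + ((i:ℚ)+1)*((m:ℚ)+(i:ℚ))*((m:ℚ)+1-(i:ℚ))*b^2 :=
        bm_div_nonneg (by positivity) hK2
      have hQP : ((m:ℚ)+(i:ℚ))*((m:ℚ)+1-(i:ℚ)) *
          ((i:ℚ)*((i:ℚ)+1)*b^2 - (i:ℚ)*(2*(m:ℚ)+1)*a*b
            + ((m:ℚ)+(i:ℚ))*((m:ℚ)+1-(i:ℚ))*a^2)
          = (i:ℚ) * ((i:ℚ)*((i:ℚ)+1)^2*c^2 - (i:ℚ)*((i:ℚ)+1)*(2*(m:ℚ)+1)*c*b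
            + ((i:ℚ)+1)*((m:ℚ)+(i:ℚ))*((m:ℚ)+1-(i:ℚ))*b^2) := by
        linear_combination (((m:ℚ)+(i:ℚ))*((m:ℚ)+1-(i:ℚ))*a - (i:ℚ)*((i:ℚ)+1)*c) * hPa
      have hfin : (0:ℚ) ≤ ((m:ℚ)+(i:ℚ))*((m:ℚ)+1-(i:ℚ)) *
          ((i:ℚ)*((i:ℚ)+1)*b^2 - (i:ℚ)*(2*(m:ℚ)+1)*a*b
            + ((m:ℚ)+(i:ℚ))*((m:ℚ)+1-(i:ℚ))*a^2) := by
        rw [hQP]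
        apply mul_nonneg (by linarith) hK
      have := bm_div_nonneg hP hfin
      linarith [this]
    · -- vertex bound at i
      have h6 : (i:ℚ)*((i:ℚ)+1)*(2*(m:ℚ)+1) * (2*(((i:ℚ)+1)+1)*c)
          ≤ (i:ℚ)*((i:ℚ)+1)*(2*(m:ℚ)+1) * ((2*(m:ℚ)+1)*b) := by
        apply mul_le_mul_of_nonneg_left H2
        positivity
      have h7 : (4*((i:ℚ)+1)*(((m:ℚ)+(i:ℚ))*((m:ℚ)+1-(i:ℚ)))) * (((i:ℚ)+3)*b)
          ≤ ((i:ℚ)*(2*(m:ℚ)+1)^2) * (((i:ℚ)+3)*b) := by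
        apply mul_le_mul_of_nonneg_right _ (by positivity)
        linarith [hdisc]
      have h8 : (0:ℚ) ≤ 4*((i:ℚ)+1)*(((m:ℚ)+(i:ℚ))*((m:ℚ)+1-(i:ℚ)))*b := by positivity
      have hPa2 : 2*((i:ℚ)+2)*(2*(m:ℚ)+1)*(((m:ℚ)+(i:ℚ))*((m:ℚ)+1-(i:ℚ))*a)
          = 2*((i:ℚ)+2)*(2*(m:ℚ)+1)*((i:ℚ)*(2*(m:ℚ)+1)*b - (i:ℚ)*((i:ℚ)+1)*c) := by
        linear_combination 2*((i:ℚ)+2)*(2*(m:ℚ)+1) * hPa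
      have hgoal2 : (2*((i:ℚ)+2)*(((m:ℚ)+(i:ℚ))*((m:ℚ)+1-(i:ℚ)))) * (2*((i:ℚ)+1)*b)
          ≤ (2*((i:ℚ)+2)*(((m:ℚ)+(i:ℚ))*((m:ℚ)+1-(i:ℚ)))) * ((2*(m:ℚ)+1)*a) := by
        linarith [h6, h7, h8, hPa2]
      exact le_of_mul_le_mul_left hgoal2 (by positivity)

set_option maxHeartbeats 1000000 in
theorem bmCoeff_log_concave (m i : ℕ) (hm : 2 ≤ m) (hi1 : 1 ≤ i) (hi2 : i ≤ m - 1) :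
    (bmCoeff m i)^2 ≥ bmCoeff m (i-1) * bmCoeff m (i+1) := by
  have him : i ≤ m := by omega
  have hilt : i < m := by omega
  set a := bmCoeff m (i-1) with ha
  set b := bmCoeff m i with hb
  set c := bmCoeff m (i+1) with hc
  have ha0 : 0 < a := bmCoeff_pos m (i-1) (by omega)
  have hb0 : 0 < b := bmCoeff_pos m i him
  have hc0 : 0 < c := bmCoeff_pos m (i+1) (by omega)
  have hi0 : (1:ℚ) ≤ (i:ℚ) := by exact_mod_cast hi1
  have himq : (i:ℚ) + 1 ≤ (m:ℚ) := by exact_mod_cast hilt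
  have hP : (0:ℚ) < ((m:ℚ)+(i:ℚ))*((m:ℚ)+1-(i:ℚ)) := by nlinarith
  have hstar := bm_star m i hi1 him
  rw [← ha, ← hb, ← hc] at hstar
  have hPa : ((m:ℚ)+(i:ℚ))*((m:ℚ)+1-(i:ℚ))*a
      = (i:ℚ)*(2*(m:ℚ)+1)*b - (i:ℚ)*((i:ℚ)+1)*c := by linarith [hstar]
  have key : (i:ℚ)*((i:ℚ)+1)*(b^2 - a*c)
      = (i:ℚ)*((i:ℚ)+1)*b^2 - (i:ℚ)*(2*(m:ℚ)+1)*a*b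
        + ((m:ℚ)+(i:ℚ))*((m:ℚ)+1-(i:ℚ))*a^2 := by
    linear_combination (-a) * hPa
  have hQ : (0:ℚ) ≤ (i:ℚ)*((i:ℚ)+1)*b^2 - (i:ℚ)*(2*(m:ℚ)+1)*a*b
      + ((m:ℚ)+(i:ℚ))*((m:ℚ)+1-(i:ℚ))*a^2 := by
    rcases le_or_gt (4*((i:ℚ)+1)*((m:ℚ)+(i:ℚ))*((m:ℚ)+1-(i:ℚ))) ((i:ℚ)*(2*(m:ℚ)+1)^2)
      with hdisc | hdisc
    · exact (bm_inv m (by omega) (m-i) i hi1 him rfl hdisc).1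
    · have hsq : (0:ℚ) ≤ (i:ℚ) * (2*((i:ℚ)+1)*b - (2*(m:ℚ)+1)*a)^2 :=
        mul_nonneg (by linarith) (sq_nonneg _)
      have hprod : (0:ℚ) ≤ (4*((i:ℚ)+1)*((m:ℚ)+(i:ℚ))*((m:ℚ)+1-(i:ℚ))
          - (i:ℚ)*(2*(m:ℚ)+1)^2) * a^2 :=
        mul_nonneg (by linarith) (sq_nonneg a)
      have hsc : (0:ℚ) ≤ (4*((i:ℚ)+1)) * ((i:ℚ)*((i:ℚ)+1)*b^2 - (i:ℚ)*(2*(m:ℚ)+1)*a*b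
          + ((m:ℚ)+(i:ℚ))*((m:ℚ)+1-(i:ℚ))*a^2) := by linarith [hsq, hprod]
      exact bm_div_nonneg (by linarith) hsc
  rw [← key] at hQ
  have := bm_div_nonneg (show (0:ℚ) < (i:ℚ)*((i:ℚ)+1) by nlinarith) hQ
  nlinarith [this]
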